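/- Characterization of the homogenization minimizer by vanishing normal Biot stress: let μ > 0, μ_c > 0 and λ ∈ ℝ with 2μ + λ > 0; define W(X) = μ‖sym X‖² + μ_c‖skew X‖² + (λ/2)·(tr X)² and T_Biot(X) = 2μ·sym X + 2μ_c·skew X + λ·tr(X)·1₃. Let n ∈ ℝ³ with ‖n‖ = 1 and let E be a real 3×3 matrix with E n = 0. Then a vector v ∈ ℝ³ minimizes the map u ↦ W(E + u⊗n) over ℝ³ if and only if T_Biot(E + v⊗n)·n = 0; moreover the minimizer is unique. -/

import Mathlib

open Matrix

noncomputable section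

/-- Squared Frobenius norm `‖X‖² = tr (X Xᵀ)`. -/
def normSq (X : Matrix (Fin 3) (Fin 3) ℝ) : ℝ := Matrix.trace (X * Xᵀ)

/-- Squared Euclidean norm on ℝ³. -/
def vnormSq (v : Fin 3 → ℝ) : ℝ := ∑ i, v i ^ 2

/-- Symmetric part. -/
def sym3 (X : Matrix (Fin 3) (Fin 3) ℝ) : Matrix (Fin 3) (Fin 3) ℝ := ((1 : ℝ)/2) • (X + Xᵀ)

/-- Skew-symmetric part. -/
def skew3 (X : Matrix (Fin 3) (Fin 3) ℝ) : Matrix (Fin 3) (Fin 3) ℝ := ((1 : ℝ)/2) • (X - Xᵀ)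

/-- Rank-one matrix `v ⊗ n = v nᵀ`. -/
def outer (v n : Fin 3 → ℝ) : Matrix (Fin 3) (Fin 3) ℝ := Matrix.vecMulVec v n

/-- The physically linear Cosserat strain energy. -/
def Wmp (μ μc lam : ℝ) (X : Matrix (Fin 3) (Fin 3) ℝ) : ℝ :=
  μ * normSq (sym3 X) + μc * normSq (skew3 X) + (lam/2) * (Matrix.trace X)^2

/-- The Biot-type stress tensor (evaluated at the shifted stretch). -/
def TBiot (μ μc lam : ℝ) (X : Matrix (Fin 3) (Fin 3) ℝ) : Matrix (Fin 3) (Fin 3) ℝ :=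
  (2*μ) • sym3 X + (2*μc) • skew3 X + (lam * Matrix.trace X) • (1 : Matrix (Fin 3) (Fin 3) ℝ)


/-- auxiliary dot product -/
def dot3 (v w : Fin 3 → ℝ) : ℝ := ∑ i, v i * w i

lemma fin3_mk2 : (⟨2, by omega⟩ : Fin 3) = 2 := rfl

lemma addOuter_apply (E : Matrix (Fin 3) (Fin 3) ℝ) (u n : Fin 3 → ℝ) (i j : Fin 3) :
    (E + outer u n) i j = E i j + u i * n j := rfl

lemma Wexp (μ μc lam : ℝ) (X : Matrix (Fin 3) (Fin 3) ℝ) :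
    Wmp μ μc lam X = μ * (X 0 0 ^2 + X 1 1 ^2 + X 2 2 ^2
        + ((X 0 1 + X 1 0)^2 + (X 0 2 + X 2 0)^2 + (X 1 2 + X 2 1)^2)/2)
      + μc * (((X 0 1 - X 1 0)^2 + (X 0 2 - X 2 0)^2 + (X 1 2 - X 2 1)^2)/2)
      + (lam/2) * (X 0 0 + X 1 1 + X 2 2)^2 := by
  simp only [Wmp, sym3, skew3, normSq, Matrix.trace, Matrix.mul_apply, Fin.sum_univ_three,
    Matrix.smul_apply, Matrix.add_apply, Matrix.sub_apply, Matrix.transpose_apply,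
    Matrix.diag_apply, smul_eq_mul]
  ring

lemma Texp (μ μc lam : ℝ) (X : Matrix (Fin 3) (Fin 3) ℝ) (n : Fin 3 → ℝ) (i : Fin 3) :
    ((TBiot μ μc lam X).mulVec n) i =
      μ * ((X i 0 + X 0 i) * n 0 + (X i 1 + X 1 i) * n 1 + (X i 2 + X 2 i) * n 2)
      + μc * ((X i 0 - X 0 i) * n 0 + (X i 1 - X 1 i) * n 1 + (X i 2 - X 2 i) * n 2)
      + lam * (X 0 0 + X 1 1 + X 2 2) * n i := by
  fin_cases i <;>
  · simp only [TBiot, sym3, skew3, Matrix.trace, Matrix.mulVec, dotProduct,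
      Fin.sum_univ_three, Matrix.smul_apply, Matrix.add_apply, Matrix.sub_apply,
      Matrix.transpose_apply, Matrix.one_apply, Matrix.diag_apply, smul_eq_mul]
    norm_num [Fin.ext_iff, fin3_mk2]
    ring

lemma lagrange3 (a b : Fin 3 → ℝ) : dot3 a b ^ 2 ≤ vnormSq a * vnormSq b := by
  simp only [dot3, vnormSq, Fin.sum_univ_three]
  nlinarith [sq_nonneg (a 0 * b 1 - a 1 * b 0), sq_nonneg (a 0 * b 2 - a 2 * b 0),
    sq_nonneg (a 1 * b 2 - a 2 * b 1)]

lemma vnormSq_nonneg (a : Fin 3 → ℝ) : 0 ≤ vnormSq a := by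
  simp only [vnormSq, Fin.sum_univ_three]; positivity

lemma dot3_self_nonneg (a : Fin 3 → ℝ) : 0 ≤ dot3 a a := by
  simp only [dot3, Fin.sum_univ_three]; nlinarith [sq_nonneg (a 0), sq_nonneg (a 1), sq_nonneg (a 2)]

set_option maxHeartbeats 1000000 in
lemma keyIdentity (μ μc lam : ℝ) (n v w : Fin 3 → ℝ) (E : Matrix (Fin 3) (Fin 3) ℝ) :
    Wmp μ μc lam (E + outer (v + w) n) = Wmp μ μc lam (E + outer v n)
      + dot3 ((TBiot μ μc lam (E + outer v n)).mulVec n) w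
      + ((μ/2) * (vnormSq w * vnormSq n + (dot3 w n)^2)
        + (μc/2) * (vnormSq w * vnormSq n - (dot3 w n)^2)
        + (lam/2) * (dot3 w n)^2) := by
  rw [Wexp, Wexp]
  simp only [dot3, vnormSq, Fin.sum_univ_three, Texp, addOuter_apply, Pi.add_apply]
  ring

set_option maxHeartbeats 1000000 in
theorem minimizer_iff_zero_normal_biot_stress (μ μc lam : ℝ)
    (hμ : 0 < μ) (hμc : 0 < μc) (hlam : 0 < 2*μ + lam)
    (n : Fin 3 → ℝ) (hn : vnormSq n = 1)
    (E : Matrix (Fin 3) (Fin 3) ℝ) (hE : E.mulVec n = 0) :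
    (∀ v : Fin 3 → ℝ,
      ((∀ u : Fin 3 → ℝ, Wmp μ μc lam (E + outer u n) ≥ Wmp μ μc lam (E + outer v n)) ↔
        (TBiot μ μc lam (E + outer v n)).mulVec n = 0)) ∧
    (∃! v : Fin 3 → ℝ,
      ∀ u : Fin 3 → ℝ, Wmp μ μc lam (E + outer u n) ≥ Wmp μ μc lam (E + outer v n)) := by
  have hn' : n 0 ^ 2 + n 1 ^ 2 + n 2 ^ 2 = 1 := by
    simpa [vnormSq, Fin.sum_univ_three] using hn
  have hμμc : (0:ℝ) < μ + μc := by linarith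
  obtain ⟨b, hb⟩ : ∃ b : Fin 3 → ℝ, b = (TBiot μ μc lam E).mulVec n := ⟨_, rfl⟩
  -- gradient formula
  have hg : ∀ (v : Fin 3 → ℝ) (i : Fin 3), ((TBiot μ μc lam (E + outer v n)).mulVec n) i
      = b i + (μ + μc) * v i + (μ - μc + lam) * (dot3 v n) * n i := by
    intro v i
    simp only [hb, Texp, addOuter_apply, dot3, Fin.sum_univ_three]
    linear_combination ((μ + μc) * v i) * hn'
  -- nonnegativity of the quadratic part
  have hQnn : ∀ w : Fin 3 → ℝ, 0 ≤ (μ/2) * (vnormSq w * vnormSq n + (dot3 w n)^2)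
      + (μc/2) * (vnormSq w * vnormSq n - (dot3 w n)^2) + (lam/2) * (dot3 w n)^2 := by
    intro w
    have h1 : (dot3 w n)^2 ≤ vnormSq w * vnormSq n := lagrange3 w n
    have h3 : 0 ≤ (dot3 w n)^2 := sq_nonneg _
    nlinarith [mul_nonneg hμ.le (sub_nonneg.2 h1), mul_nonneg hμc.le (sub_nonneg.2 h1),
      mul_nonneg hlam.le h3]
  -- the equivalence
  have hiff : ∀ v : Fin 3 → ℝ,
      ((∀ u : Fin 3 → ℝ, Wmp μ μc lam (E + outer u n) ≥ Wmp μ μc lam (E + outer v n)) ↔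
        (TBiot μ μc lam (E + outer v n)).mulVec n = 0) := by
    intro v
    constructor
    · intro hmin
      set g := (TBiot μ μc lam (E + outer v n)).mulVec n with hgdef
      have hs0 : dot3 g g ≤ 0 := by
        by_contra hpos
        push_neg at hpos
        set q := (μ/2) * (vnormSq g * vnormSq n + (dot3 g n)^2)
          + (μc/2) * (vnormSq g * vnormSq n - (dot3 g n)^2) + (lam/2) * (dot3 g n)^2 with hq
        have hqnn : 0 ≤ q := hQnn g
        set t := dot3 g g / (2*(q+1)) with ht
        have htpos : 0 < t := div_pos hpos (by linarith)
        have hKI := keyIdentity μ μc lam n v (fun i => -t * g i) E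
        have hmin' := hmin (v + fun i => -t * g i)
        have e1 : dot3 g (fun i => -t * g i) = -t * dot3 g g := by
          simp only [dot3, Fin.sum_univ_three]; ring
        have e2 : vnormSq (fun i => -t * g i) = t^2 * vnormSq g := by
          simp only [vnormSq, Fin.sum_univ_three]; ring
        have e3 : dot3 (fun i => -t * g i) n = -t * dot3 g n := by
          simp only [dot3, Fin.sum_univ_three]; ring
        rw [e1, e2, e3] at hKI
        have hbig : (μ/2) * (t^2 * vnormSq g * vnormSq n + (-t * dot3 g n)^2)
            + (μc/2) * (t^2 * vnormSq g * vnormSq n - (-t * dot3 g n)^2)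
            + (lam/2) * (-t * dot3 g n)^2 = t^2 * q := by
          rw [hq]; ring
        rw [hbig] at hKI
        have hineq : 0 ≤ -t * dot3 g g + t^2 * q := by linarith
        have hts : dot3 g g = 2 * t * (q + 1) := by
          rw [ht]; field_simp
        have hts' : t * dot3 g g = 2 * (t^2 * q) + 2 * t^2 := by
          rw [hts]; ring
        have htq : 0 ≤ t^2 * q := mul_nonneg (sq_nonneg t) hqnn
        have ht2 : 0 < t^2 := pow_pos htpos 2
        linarith
      have hgg : dot3 g g = 0 := le_antisymm hs0 (dot3_self_nonneg g)
      simp only [dot3, Fin.sum_univ_three] at hgg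
      have h0 : g 0 = 0 := by
        have : g 0 * g 0 ≤ 0 := by nlinarith [mul_self_nonneg (g 1), mul_self_nonneg (g 2)]
        exact mul_self_eq_zero.mp (le_antisymm this (mul_self_nonneg _))
      have h1 : g 1 = 0 := by
        have : g 1 * g 1 ≤ 0 := by nlinarith [mul_self_nonneg (g 0), mul_self_nonneg (g 2)]
        exact mul_self_eq_zero.mp (le_antisymm this (mul_self_nonneg _))
      have h2 : g 2 = 0 := by
        have : g 2 * g 2 ≤ 0 := by nlinarith [mul_self_nonneg (g 0), mul_self_nonneg (g 1)]
        exact mul_self_eq_zero.mp (le_antisymm this (mul_self_nonneg _))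
      funext i
      fin_cases i
      · exact h0
      · exact h1
      · exact h2
    · intro hzero u
      have hKI := keyIdentity μ μc lam n v (u - v) E
      have hvw : v + (u - v) = u := by funext i; simp
      rw [hvw, hzero] at hKI
      have hd0 : dot3 (0 : Fin 3 → ℝ) (u - v) = 0 := by simp [dot3]
      rw [hd0] at hKI
      have := hQnn (u - v)
      linarith
  refine ⟨hiff, ?_⟩
  -- existence of a minimizer
  have h2l : (2*μ + lam) ≠ 0 := ne_of_gt hlam
  have hμμc' : (μ + μc) ≠ 0 := ne_of_gt hμμc
  obtain ⟨c, hc⟩ : ∃ c : ℝ, c = (μ - μc + lam) * (dot3 b n) / (2*μ + lam) := ⟨_, rfl⟩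
  obtain ⟨v0, hv0⟩ : ∃ v0 : Fin 3 → ℝ, v0 = fun i => (-(b i) + c * n i) / (μ + μc) := ⟨_, rfl⟩
  have hdv0 : dot3 v0 n = -(dot3 b n) / (2*μ + lam) := by
    have step1 : dot3 v0 n = (-(dot3 b n) + c * (n 0^2 + n 1^2 + n 2^2)) / (μ + μc) := by
      simp only [hv0, dot3, Fin.sum_univ_three]; ring
    rw [step1, hn', hc]
    rw [div_eq_div_iff hμμc' h2l, mul_one, add_div' _ _ _ h2l, div_mul_eq_mul_div, div_eq_iff h2l]
    ring
  have hv0min : (TBiot μ μc lam (E + outer v0 n)).mulVec n = 0 := by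
    funext i
    have h := hg v0 i
    rw [hdv0] at h
    rw [h]
    simp only [Pi.zero_apply, hv0, hc]
    field_simp
    ring
  have hgeq : ∀ v' : Fin 3 → ℝ,
      (TBiot μ μc lam (E + outer v' n)).mulVec n = 0 →
      ∀ i, b i + (μ + μc) * v' i + (μ - μc + lam) * (dot3 v' n) * n i = 0 := by
    intro v' hz i
    have h := congrFun hz i
    rw [hg v' i] at h
    simpa using h
  refine ⟨v0, (hiff v0).mpr hv0min, ?_⟩
  intro v' hv'
  have h1 := hgeq v' ((hiff v').mp hv')
  have h2 := hgeq v0 hv0min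
  have hdd : (2*μ + lam) * (dot3 v' n - dot3 v0 n) = 0 := by
    have a0 := h1 0; have a1 := h1 1; have a2 := h1 2
    have c0 := h2 0; have c1 := h2 1; have c2 := h2 2
    simp only [dot3, Fin.sum_univ_three] at a0 a1 a2 c0 c1 c2 ⊢
    linear_combination n 0 * (a0 - c0) + n 1 * (a1 - c1) + n 2 * (a2 - c2)
      - ((μ - μc + lam) * ((v' 0 * n 0 + v' 1 * n 1 + v' 2 * n 2)
          - (v0 0 * n 0 + v0 1 * n 1 + v0 2 * n 2))) * hn'
  have hdeq : dot3 v' n = dot3 v0 n := by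
    rcases mul_eq_zero.mp hdd with h | h
    · exact absurd h h2l
    · linarith
  funext i
  have e1 := h1 i
  have e2 := h2 i
  rw [hdeq] at e1
  have he : (μ + μc) * (v' i - v0 i) = 0 := by linear_combination e1 - e2
  rcases mul_eq_zero.mp he with h | h
  · exact absurd h hμμc'
  · linarith

end
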